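/- (Corollary for the family a·(D+b).) Let I ⊆ (0,∞) be an open interval, D : I → ℝ three times continuously differentiable with D(p) > 0 and D'(p) < 0 on I, and R(p) := p·D(p) with R''(p) < 0 on I. Let a > 0 and b < 0 with D(p) + b > 0 on I, and set D_L(p) := a·(D(p) + b) and D_H := D. Suppose there exist p_L*, p_H* ∈ I with R'(p_L*) = −b and R'(p_H*) = 0; then p_L* < p_H*, D_L and D_H together with these monopoly prices form a binary monopoly model, and for every α ∈ (0,1]: (i) for all p ∈ (p_L*, p_H*), the derivative of the marginal expression satisfies E_α'(p) = (R_L'(p) − R_H'(p)) · ( −(1−2α) + (d/dp)[α·p·D'(p)/R''(p)] ), where R_L(p) = p·D_L(p) and R_H(p) = p·D(p); (ii) the value function W^α is concave on [0,1] if and only if p ↦ (2α−1)·p + α·p·D'(p)/R''(p) is nondecreasing on (p_L*, p_H*), and W^α is convex on [0,1] if and only if that map is nonincreasing on (p_L*, p_H*). -/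

import Mathlib

open Set Filter Topology

private lemma aux_deriv_nonneg_of_monotoneOn {f : ℝ → ℝ} {s : Set ℝ} {x f' : ℝ}
    (hf : HasDerivAt f f' x) (hm : MonotoneOn f s) (hs : s ∈ 𝓝 x) (hx : x ∈ s) : 0 ≤ f' := by
  rw [hasDerivAt_iff_tendsto_slope] at hf
  refine ge_of_tendsto hf ?_
  filter_upwards [self_mem_nhdsWithin, mem_nhdsWithin_of_mem_nhds hs] with y hy hys
  have hyx : y ≠ x := hy
  rcases lt_or_gt_of_ne hyx with h | h
  · rw [slope_def_field]
    have h1 : f y - f x ≤ 0 := by simpa using sub_nonpos.mpr (hm hys hx h.le)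
    have h2 : y - x < 0 := by linarith
    exact div_nonneg_of_nonpos h1 h2.le
  · rw [slope_def_field]
    apply div_nonneg
    · simpa using sub_nonneg.mpr (hm hx hys h.le)
    · linarith

private lemma aux_deriv_nonpos_of_antitoneOn {f : ℝ → ℝ} {s : Set ℝ} {x f' : ℝ}
    (hf : HasDerivAt f f' x) (hm : AntitoneOn f s) (hs : s ∈ 𝓝 x) (hx : x ∈ s) : f' ≤ 0 := by
  have := aux_deriv_nonneg_of_monotoneOn hf.neg hm.neg hs hx
  linarith

set_option maxHeartbeats 1000000 in
/-- (Corollary for the family `a·(D+b)`.) With `D_L = a·(D+b)` and `D_H = D`,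
the pair forms a binary monopoly model with monopoly prices `p_L* < p_H*` determined by
`R'(p_L*) = −b`, `R'(p_H*) = 0`, the derivative of the marginal expression simplifies as in
(i), and `W^α` is concave (convex) on `[0,1]` iff `p ↦ (2α−1)p + α·p·D'(p)/R''(p)` is
nondecreasing (nonincreasing) on `(p_L*, p_H*)`. -/
theorem stmt_8
    (I : Set ℝ) (D : ℝ → ℝ) (a b : ℝ)
    (hIopen : IsOpen I) (hIconv : Convex ℝ I) (hIpos : I ⊆ Set.Ioi (0:ℝ))
    (hD : ContDiffOn ℝ 3 D I) (hDpos : ∀ q ∈ I, 0 < D q) (hD' : ∀ q ∈ I, deriv D q < 0)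
    (R : ℝ → ℝ) (hR : R = fun q => q * D q)
    (hR'' : ∀ q ∈ I, deriv (deriv R) q < 0)
    (ha : 0 < a) (hb : b < 0) (hDb : ∀ q ∈ I, 0 < D q + b)
    (pLs pHs : ℝ) (hpLs : pLs ∈ I) (hpHs : pHs ∈ I)
    (hRpL : deriv R pLs = -b) (hRpH : deriv R pHs = 0)
    (DL DH RL RH : ℝ → ℝ)
    (hDL : DL = fun q => a * (D q + b)) (hDH : DH = D)
    (hRL : RL = fun q => q * DL q) (hRH : RH = fun q => q * DH q)
    (p : ℝ → ℝ)
    (hp : ∀ μ ∈ Set.Icc (0:ℝ) 1, p μ ∈ Set.Icc pLs pHs ∧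
      (1 - μ) * deriv RL (p μ) + μ * deriv RH (p μ) = 0)
    (CSL CSH : ℝ → ℝ)
    (hCSL : ∀ q ∈ I, HasDerivAt CSL (-(DL q)) q)
    (hCSH : ∀ q ∈ I, HasDerivAt CSH (-(DH q)) q)
    (VL VH : ℝ → ℝ → ℝ)
    (hVL : ∀ α : ℝ, VL α = fun q => α * CSL q + (1 - α) * RL q)
    (hVH : ∀ α : ℝ, VH α = fun q => α * CSH q + (1 - α) * RH q)
    (E : ℝ → ℝ → ℝ)
    (hE : ∀ α q : ℝ, E α q =
      VH α q - VL α q +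
        (deriv (VL α) q - (deriv RL q / deriv RH q) * deriv (VH α) q) /
          (deriv (deriv RL) q - (deriv RL q / deriv RH q) * deriv (deriv RH) q) *
          (deriv RL q - deriv RH q))
    (W : ℝ → ℝ → ℝ)
    (hW : ∀ α : ℝ, W α = fun μ => (1 - μ) * VL α (p μ) + μ * VH α (p μ)) :
    pLs < pHs ∧
    (∀ q ∈ I, 0 < DL q) ∧ (∀ q ∈ I, deriv DL q < 0) ∧
    (∀ q ∈ I, deriv (deriv RL) q < 0) ∧ (∀ q ∈ I, deriv (deriv RH) q < 0) ∧
    deriv RL pLs = 0 ∧ deriv RH pHs = 0 ∧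
    ∀ α ∈ Set.Ioc (0:ℝ) 1,
      (∀ q ∈ Set.Ioo pLs pHs,
        HasDerivAt (E α)
          ((deriv RL q - deriv RH q) *
            (-(1 - 2 * α) +
              deriv (fun s => α * s * deriv D s / deriv (deriv R) s) q)) q) ∧
      (ConcaveOn ℝ (Set.Icc (0:ℝ) 1) (W α) ↔
        MonotoneOn (fun q => (2 * α - 1) * q + α * q * deriv D q / deriv (deriv R) q)
          (Set.Ioo pLs pHs)) ∧
      (ConvexOn ℝ (Set.Icc (0:ℝ) 1) (W α) ↔
        AntitoneOn (fun q => (2 * α - 1) * q + α * q * deriv D q / deriv (deriv R) q)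
          (Set.Ioo pLs pHs)) := by
  have hIcc : Set.Icc pLs pHs ⊆ I := hIconv.ordConnected.out hpLs hpHs
  have hIoo : Set.Ioo pLs pHs ⊆ I := fun q hq => hIcc (Set.Ioo_subset_Icc_self hq)
  have hRH_R : RH = R := by rw [hRH, hDH, hR]
  -- differentiability of D and R
  have hDd : ∀ q ∈ I, HasDerivAt D (deriv D q) q := fun q hq =>
    ((hD.differentiableOn (by norm_num)).differentiableAt (hIopen.mem_nhds hq)).hasDerivAt
  have hRcd : ContDiffOn ℝ 3 R I := by rw [hR]; exact contDiffOn_id.mul hD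
  have hD1cd : ContDiffOn ℝ 2 (deriv D) I :=
    ((contDiffOn_succ_iff_deriv_of_isOpen hIopen).1
      (hD.of_le (by norm_num : (2+1 : WithTop ℕ∞) ≤ 3))).2.2
  have hR1cd : ContDiffOn ℝ 2 (deriv R) I :=
    ((contDiffOn_succ_iff_deriv_of_isOpen hIopen).1
      (hRcd.of_le (by norm_num : (2+1 : WithTop ℕ∞) ≤ 3))).2.2
  have hR2cd : ContDiffOn ℝ 1 (deriv (deriv R)) I :=
    ((contDiffOn_succ_iff_deriv_of_isOpen hIopen).1
      (hR1cd.of_le (by norm_num : (1+1 : WithTop ℕ∞) ≤ 2))).2.2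
  have hD'diff : ∀ q ∈ I, DifferentiableAt ℝ (deriv D) q := fun q hq =>
    (hD1cd.differentiableOn (by norm_num)).differentiableAt (hIopen.mem_nhds hq)
  have hR'd : ∀ q ∈ I, HasDerivAt (deriv R) (deriv (deriv R) q) q := fun q hq =>
    ((hR1cd.differentiableOn (by norm_num)).differentiableAt (hIopen.mem_nhds hq)).hasDerivAt
  have hR''diff : ∀ q ∈ I, DifferentiableAt ℝ (deriv (deriv R)) q := fun q hq =>
    (hR2cd.differentiableOn (by norm_num)).differentiableAt (hIopen.mem_nhds hq)
  have hRd : ∀ q ∈ I, HasDerivAt R (deriv R q) q := fun q hq =>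
    ((hRcd.differentiableOn (by norm_num)).differentiableAt (hIopen.mem_nhds hq)).hasDerivAt
  have hderivR : ∀ q ∈ I, deriv R q = D q + q * deriv D q := by
    intro q hq
    have h1 : HasDerivAt R (1 * D q + q * deriv D q) q := by
      rw [hR]; exact (hasDerivAt_id q).mul (hDd q hq)
    rw [h1.deriv]; ring
  -- RL facts
  have hRLfun : RL = fun s => a * R s + (a * b) * s := by
    rw [hRL, hDL, hR]; funext s; ring
  have hRLd : ∀ q ∈ I, HasDerivAt RL (a * deriv R q + a * b) q := by
    intro q hq
    rw [hRLfun]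
    have h1 : HasDerivAt (fun s => a * R s + (a * b) * s) (a * deriv R q + (a * b) * 1) q :=
      ((hRd q hq).const_mul a).add ((hasDerivAt_id q).const_mul (a * b))
    simpa using h1
  have hderivRL : ∀ q ∈ I, deriv RL q = a * deriv R q + a * b := fun q hq => (hRLd q hq).deriv
  have hderivRL2 : ∀ q ∈ I, deriv (deriv RL) q = a * deriv (deriv R) q := by
    intro q hq
    have hev : deriv RL =ᶠ[𝓝 q] fun s => a * deriv R s + a * b :=
      eventually_of_mem (hIopen.mem_nhds hq) (fun s hs => hderivRL s hs)
    rw [hev.deriv_eq]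
    have h1 : HasDerivAt (fun s => a * deriv R s + a * b) (a * deriv (deriv R) q) q :=
      ((hR'd q hq).const_mul a).add_const _
    exact h1.deriv
  -- strict antitonicity of deriv R
  have hR'cont : ContinuousOn (deriv R) I := fun q hq =>
    (hR'd q hq).continuousAt.continuousWithinAt
  have hRanti : StrictAntiOn (deriv R) I := by
    apply strictAntiOn_of_deriv_neg hIconv hR'cont
    rw [hIopen.interior_eq]; exact hR''
  have hlt : pLs < pHs := by
    rcases lt_trichotomy pLs pHs with h | h | h
    · exact h
    · exfalso; rw [h, hRpH] at hRpL; linarith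
    · exfalso; have := hRanti hpHs hpLs h; rw [hRpL, hRpH] at this; linarith
  have hr1Icc : ∀ q ∈ Set.Icc pLs pHs, 0 ≤ deriv R q ∧ deriv R q ≤ -b := by
    intro q hq
    constructor
    · rcases eq_or_lt_of_le hq.2 with h | h
      · rw [h, hRpH]
      · have := hRanti (hIcc hq) hpHs h; rw [hRpH] at this; linarith
    · rcases eq_or_lt_of_le hq.1 with h | h
      · rw [← h, hRpL]
      · have := hRanti hpLs (hIcc hq) h; rw [hRpL] at this; linarith
  have hr1Ioo : ∀ q ∈ Set.Ioo pLs pHs, 0 < deriv R q ∧ deriv R q < -b := by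
    intro q hq
    constructor
    · have := hRanti (hIoo hq) hpHs hq.2; rw [hRpH] at this; linarith
    · have := hRanti hpLs (hIoo hq) hq.1; rw [hRpL] at this; linarith
  have hGneg : ∀ q ∈ Set.Icc pLs pHs, (a - 1) * deriv R q + a * b < 0 := by
    intro q hq
    obtain ⟨h0, h1⟩ := hr1Icc q hq
    nlinarith [mul_nonneg ha.le (by linarith : (0:ℝ) ≤ -b - deriv R q)]
  have hGLH : ∀ q ∈ Set.Icc pLs pHs, deriv RL q - deriv RH q = (a - 1) * deriv R q + a * b := by
    intro q hq
    rw [hderivRL q (hIcc hq), hRH_R]; ring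
  -- FOC rewritten
  have hcpos : ∀ μ ∈ Set.Icc (0:ℝ) 1, 0 < (1 - μ) * a + μ := by
    intro μ hμ
    nlinarith [hμ.1, hμ.2, mul_nonneg (by linarith [hμ.2] : (0:ℝ) ≤ 1 - μ) ha.le]
  have hFOC : ∀ μ ∈ Set.Icc (0:ℝ) 1, ((1 - μ) * a + μ) * deriv R (p μ) = -((1 - μ) * a * b) := by
    intro μ hμ
    have h1 := (hp μ hμ).2
    have h2 := (hp μ hμ).1
    rw [hderivRL _ (hIcc h2), hRH_R] at h1
    linear_combination h1
  have hpmem : ∀ μ ∈ Set.Icc (0:ℝ) 1, p μ ∈ Set.Icc pLs pHs := fun μ hμ => (hp μ hμ).1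
  have hpmono : StrictMonoOn p (Set.Icc (0:ℝ) 1) := by
    intro μ hμ ν hν hμν
    have e1 := hFOC μ hμ
    have e2 := hFOC ν hν
    have c1 := hcpos μ hμ
    have c2 := hcpos ν hν
    have hRν : deriv R (p ν) < deriv R (p μ) := by
      have hab : 0 < -(a * b) := by nlinarith
      have key : ((1 - μ) * a + μ) * ((1 - ν) * a + ν) * (deriv R (p μ) - deriv R (p ν))
          = -(a * b) * (ν - μ) := by
        linear_combination ((1 - ν) * a + ν) * e1 - ((1 - μ) * a + μ) * e2
      have hpos : 0 < ((1 - μ) * a + μ) * ((1 - ν) * a + ν) *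
          (deriv R (p μ) - deriv R (p ν)) := by
        rw [key]; exact mul_pos hab (by linarith)
      nlinarith [mul_pos c1 c2]
    -- conclude p μ < p ν
    by_contra hcon
    push_neg at hcon
    rcases eq_or_lt_of_le hcon with h | h
    · rw [h] at hRν; exact lt_irrefl _ hRν
    · have := hRanti (hIcc (hpmem ν hν)) (hIcc (hpmem μ hμ)) h
      linarith
  have hp0 : p 0 = pLs := by
    have h0 : (0:ℝ) ∈ Set.Icc (0:ℝ) 1 := by norm_num
    have h := hFOC 0 h0
    have h2 : a * (deriv R (p 0) + b) = 0 := by linear_combination h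
    have hval : deriv R (p 0) = -b := by
      rcases mul_eq_zero.mp h2 with h3 | h3
      · exact absurd h3 (ne_of_gt ha)
      · linarith
    exact hRanti.injOn (hIcc (hpmem 0 h0)) hpLs (by rw [hval, hRpL])
  have hp1 : p 1 = pHs := by
    have h1 : (1:ℝ) ∈ Set.Icc (0:ℝ) 1 := by norm_num
    have hval : deriv R (p 1) = 0 := by linear_combination hFOC 1 h1
    exact hRanti.injOn (hIcc (hpmem 1 h1)) hpHs (by rw [hval, hRpH])
  have hpIoo : ∀ μ ∈ Set.Ioo (0:ℝ) 1, p μ ∈ Set.Ioo pLs pHs := by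
    intro μ hμ
    constructor
    · rw [← hp0]
      exact hpmono (by norm_num) ⟨hμ.1.le, hμ.2.le⟩ hμ.1
    · rw [← hp1]
      exact hpmono ⟨hμ.1.le, hμ.2.le⟩ (by norm_num) hμ.2
  have hsurj : ∀ v ∈ Set.Ioo pLs pHs, ∃ μ ∈ Set.Ioo (0:ℝ) 1, p μ = v := by
    intro v hv
    have hvI : v ∈ I := hIoo hv
    obtain ⟨hr1pos, hr1lt⟩ := hr1Ioo v hv
    have hg : (a - 1) * deriv R v + a * b < 0 := hGneg v (Set.Ioo_subset_Icc_self hv)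
    have hgne : (a - 1) * deriv R v + a * b ≠ 0 := ne_of_lt hg
    have hnum : a * (deriv R v + b) < 0 := mul_neg_of_pos_of_neg ha (by linarith)
    set μv := a * (deriv R v + b) / ((a - 1) * deriv R v + a * b) with hμv
    have hμv0 : 0 < μv := div_pos_of_neg_of_neg hnum hg
    have hμv1 : μv < 1 := by
      have h1 : μv - 1 = deriv R v / ((a - 1) * deriv R v + a * b) := by
        have key : μv * ((a - 1) * deriv R v + a * b) = a * (deriv R v + b) := by
          rw [hμv]; exact div_mul_cancel₀ _ hgne
        rw [eq_div_iff hgne]; linear_combination key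
      have h2 : deriv R v / ((a - 1) * deriv R v + a * b) < 0 :=
        div_neg_of_pos_of_neg hr1pos hg
      linarith [h1 ▸ h2]
    have hμIcc : μv ∈ Set.Icc (0:ℝ) 1 := ⟨hμv0.le, hμv1.le⟩
    have hfocv : ((1 - μv) * a + μv) * deriv R v = -((1 - μv) * a * b) := by
      have key : μv * ((a - 1) * deriv R v + a * b) = a * (deriv R v + b) := by
        rw [hμv]; exact div_mul_cancel₀ _ hgne
      linear_combination (-1 : ℝ) * key
    have hfocp := hFOC μv hμIcc
    have hceq : deriv R (p μv) = deriv R v :=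
      mul_left_cancel₀ (ne_of_gt (hcpos μv hμIcc)) (by rw [hfocp, hfocv])
    exact ⟨μv, ⟨hμv0, hμv1⟩, hRanti.injOn (hIcc (hpmem μv hμIcc)) hvI hceq⟩
  have hpcont : ContinuousOn p (Set.Icc (0:ℝ) 1) := by
    intro μ0 hμ0
    have hsub : Set.Icc (0:ℝ) 1 ⊆ (Set.Icc (0:ℝ) 1 ∩ Set.Iic μ0) ∪ (Set.Icc (0:ℝ) 1 ∩ Set.Ici μ0) := by
      intro y hy
      rcases le_total y μ0 with h | h
      · exact Or.inl ⟨hy, h⟩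
      · exact Or.inr ⟨hy, h⟩
    refine ContinuousWithinAt.mono ?_ hsub
    apply ContinuousWithinAt.union
    · -- left piece
      rcases eq_or_lt_of_le hμ0.1 with h0 | h0
      · refine ContinuousWithinAt.mono continuousWithinAt_singleton ?_
        intro y hy
        have : y = μ0 := le_antisymm hy.2 (h0 ▸ hy.1.1)
        simp [this]
      · have hnb : Set.Icc (0:ℝ) 1 ∈ 𝓝[≤] μ0 := Icc_mem_nhdsLE_of_mem ⟨h0, hμ0.2⟩
        have hbtw : ∀ β < p μ0, ∃ c ∈ Set.Icc (0:ℝ) 1, p c ∈ Set.Ico β (p μ0) := by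
          intro β hβ
          have hpls : pLs < p μ0 := by
            rw [← hp0]; exact hpmono (by norm_num) hμ0 h0
          rcases le_total β pLs with hc | hc
          · exact ⟨0, by norm_num, by rw [hp0]; exact ⟨hc, hpls⟩⟩
          · have hple : p μ0 ≤ pHs := (hpmem μ0 hμ0).2
            have hvmem : (β + p μ0) / 2 ∈ Set.Ioo pLs pHs := by
              constructor
              · nlinarith
              · nlinarith
            obtain ⟨μ1, hμ1, hpμ1⟩ := hsurj _ hvmem
            exact ⟨μ1, ⟨hμ1.1.le, hμ1.2.le⟩, by rw [hpμ1]; constructor <;> nlinarith⟩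
        exact (hpmono.continuousWithinAt_left_of_exists_between hnb hbtw).mono
          (Set.inter_subset_right)
    · -- right piece
      rcases eq_or_lt_of_le hμ0.2 with h1 | h1
      · refine ContinuousWithinAt.mono continuousWithinAt_singleton ?_
        intro y hy
        have : y = μ0 := le_antisymm (h1 ▸ hy.1.2) hy.2
        simp [this]
      · have hnb : Set.Icc (0:ℝ) 1 ∈ 𝓝[≥] μ0 := Icc_mem_nhdsGE_of_mem ⟨hμ0.1, h1⟩
        have hbtw : ∀ β > p μ0, ∃ c ∈ Set.Icc (0:ℝ) 1, p c ∈ Set.Ioc (p μ0) β := by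
          intro β hβ
          have hphs : p μ0 < pHs := by
            rw [← hp1]; exact hpmono hμ0 (by norm_num) h1
          rcases le_total pHs β with hc | hc
          · exact ⟨1, by norm_num, by rw [hp1]; exact ⟨hphs, hc⟩⟩
          · have hvmem : (p μ0 + β) / 2 ∈ Set.Ioo pLs pHs := by
              constructor
              · have : pLs ≤ p μ0 := (hpmem μ0 hμ0).1
                nlinarith
              · nlinarith
            obtain ⟨μ1, hμ1, hpμ1⟩ := hsurj _ hvmem
            exact ⟨μ1, ⟨hμ1.1.le, hμ1.2.le⟩, by rw [hpμ1]; constructor <;> nlinarith⟩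
        exact (hpmono.continuousWithinAt_right_of_exists_between hnb hbtw).mono
          (Set.inter_subset_right)
  have hpd : ∀ μ ∈ Set.Ioo (0:ℝ) 1,
      HasDerivAt p ((a * b * deriv (deriv R) (p μ) /
        (((a - 1) * deriv R (p μ) + a * b) ^ 2))⁻¹) μ := by
    intro μ hμ
    have hμIcc : μ ∈ Set.Icc (0:ℝ) 1 := ⟨hμ.1.le, hμ.2.le⟩
    have hq0 : p μ ∈ Set.Ioo pLs pHs := hpIoo μ hμ
    have hq0I : p μ ∈ I := hIoo hq0
    have hg : (a - 1) * deriv R (p μ) + a * b < 0 := hGneg _ (Set.Ioo_subset_Icc_self hq0)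
    have hgne : (a - 1) * deriv R (p μ) + a * b ≠ 0 := ne_of_lt hg
    have hnum : HasDerivAt (fun v => a * (deriv R v + b)) (a * deriv (deriv R) (p μ)) (p μ) :=
      ((hR'd _ hq0I).add_const b).const_mul a
    have hden : HasDerivAt (fun v => (a - 1) * deriv R v + a * b)
        ((a - 1) * deriv (deriv R) (p μ)) (p μ) :=
      ((hR'd _ hq0I).const_mul (a - 1)).add_const _
    have hM : HasDerivAt (fun v => a * (deriv R v + b) / ((a - 1) * deriv R v + a * b))
        ((a * deriv (deriv R) (p μ) * ((a - 1) * deriv R (p μ) + a * b) -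
          a * (deriv R (p μ) + b) * ((a - 1) * deriv (deriv R) (p μ))) /
          ((a - 1) * deriv R (p μ) + a * b) ^ 2) (p μ) := hnum.div hden hgne
    have hval : (a * deriv (deriv R) (p μ) * ((a - 1) * deriv R (p μ) + a * b) -
          a * (deriv R (p μ) + b) * ((a - 1) * deriv (deriv R) (p μ))) /
          ((a - 1) * deriv R (p μ) + a * b) ^ 2
        = a * b * deriv (deriv R) (p μ) / (((a - 1) * deriv R (p μ) + a * b) ^ 2) := by
      field_simp; ring
    rw [hval] at hM
    have hne : a * b * deriv (deriv R) (p μ) / (((a - 1) * deriv R (p μ) + a * b) ^ 2) ≠ 0 := by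
      apply div_ne_zero
      · have h1 : a * b < 0 := mul_neg_of_pos_of_neg ha hb
        have h2 := hR'' _ hq0I
        exact ne_of_gt (mul_pos_of_neg_of_neg h1 h2)
      · exact pow_ne_zero 2 hgne
    have hfg : ∀ᶠ y in 𝓝 μ, a * (deriv R (p y) + b) / ((a - 1) * deriv R (p y) + a * b) = y := by
      filter_upwards [Ioo_mem_nhds hμ.1 hμ.2] with y hy
      have hyIcc : y ∈ Set.Icc (0:ℝ) 1 := ⟨hy.1.le, hy.2.le⟩
      have hgy : (a - 1) * deriv R (p y) + a * b ≠ 0 :=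
        ne_of_lt (hGneg _ (hpmem y hyIcc))
      rw [div_eq_iff hgy]
      linear_combination hFOC y hyIcc
    have hcont : ContinuousAt p μ := hpcont.continuousAt (Icc_mem_nhds hμ.1 hμ.2)
    exact HasDerivAt.of_local_left_inverse hcont hM hne hfg
  refine ⟨hlt, ?_, ?_, ?_, ?_, ?_, ?_, ?_⟩
  · intro q hq; rw [hDL]; exact mul_pos ha (hDb q hq)
  · intro q hq
    have h1 : HasDerivAt DL (a * deriv D q) q := by
      rw [hDL]
      have := ((hDd q hq).add_const b).const_mul a
      simpa using this
    rw [h1.deriv]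
    exact mul_neg_of_pos_of_neg ha (hD' q hq)
  · intro q hq
    rw [hderivRL2 q hq]
    exact mul_neg_of_pos_of_neg ha (hR'' q hq)
  · intro q hq; rw [hRH_R]; exact hR'' q hq
  · rw [hderivRL pLs hpLs, hRpL]; ring
  · rw [hRH_R]; exact hRpH
  · intro α hα
    -- derivatives of VL, VH on I
    have hVLd : ∀ q ∈ I, HasDerivAt (VL α)
        (α * (-(a * (D q + b))) + (1 - α) * (a * deriv R q + a * b)) q := by
      intro q hq
      rw [hVL α]
      have h1 := ((hCSL q hq).const_mul α).add ((hRLd q hq).const_mul (1 - α))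
      rw [hDL] at h1
      exact h1
    have hVHd : ∀ q ∈ I, HasDerivAt (VH α)
        (α * (-(D q)) + (1 - α) * deriv R q) q := by
      intro q hq
      rw [hVH α]
      have hRHd : HasDerivAt RH (deriv R q) q := hRH_R ▸ hRd q hq
      have h1 := ((hCSH q hq).const_mul α).add (hRHd.const_mul (1 - α))
      rw [hDH] at h1
      exact h1
    -- differentiability of F
    have hFd : ∀ q ∈ I, DifferentiableAt ℝ (fun s => α * s * deriv D s / deriv (deriv R) s) q := by
      intro q hq
      exact ((differentiableAt_fun_id.const_mul α).mul (hD'diff q hq)).div (hR''diff q hq)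
        (ne_of_lt (hR'' q hq))
    -- E agrees with a nice function on the open interval
    have hEeq : ∀ s ∈ Set.Ioo pLs pHs, E α s
        = VH α s - VL α s +
          (α * s * deriv D s / deriv (deriv R) s) * ((a * deriv R s + a * b) - deriv R s) := by
      intro s hs
      have hsI : s ∈ I := hIoo hs
      have h1 : 0 < deriv R s := (hr1Ioo s hs).1
      have h1ne : deriv R s ≠ 0 := ne_of_gt h1
      have h2 : deriv (deriv R) s < 0 := hR'' s hsI
      have h2ne : deriv (deriv R) s ≠ 0 := ne_of_lt h2
      have habne : a * b ≠ 0 := ne_of_lt (mul_neg_of_pos_of_neg ha hb)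
      rw [hE α s, (hVLd s hsI).deriv, (hVHd s hsI).deriv, hderivRL s hsI, hderivRL2 s hsI,
        hRH_R]
      have hden : a * deriv (deriv R) s -
          (a * deriv R s + a * b) / deriv R s * deriv (deriv R) s
          = (-(a * b)) * deriv (deriv R) s / deriv R s := by
        field_simp; ring
      have hdenne : a * deriv (deriv R) s -
          (a * deriv R s + a * b) / deriv R s * deriv (deriv R) s ≠ 0 := by
        rw [hden]
        exact div_ne_zero (mul_ne_zero (by simpa using neg_ne_zero.mpr habne) h2ne) h1ne
      have hfrac : (α * (-(a * (D s + b))) + (1 - α) * (a * deriv R s + a * b) -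
            (a * deriv R s + a * b) / deriv R s * (α * (-(D s)) + (1 - α) * deriv R s)) /
            (a * deriv (deriv R) s - (a * deriv R s + a * b) / deriv R s * deriv (deriv R) s)
          = α * s * deriv D s / deriv (deriv R) s := by
        rw [div_eq_div_iff hdenne h2ne]
        have h1ne' : D s + s * deriv D s ≠ 0 := by rw [← hderivR s hsI]; exact h1ne
        rw [hderivR s hsI]
        field_simp [h1ne', h2ne]
        ring
      rw [hfrac]
    -- Part (i): derivative of E
    have hEder : ∀ q ∈ Set.Ioo pLs pHs, HasDerivAt (E α)
        ((deriv RL q - deriv RH q) *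
          (-(1 - 2 * α) + deriv (fun s => α * s * deriv D s / deriv (deriv R) s) q)) q := by
      intro q hq
      have hqI : q ∈ I := hIoo hq
      have hF : HasDerivAt (fun s => α * s * deriv D s / deriv (deriv R) s)
          (deriv (fun s => α * s * deriv D s / deriv (deriv R) s) q) q :=
        (hFd q hqI).hasDerivAt
      have hGd : HasDerivAt (fun s => (a * deriv R s + a * b) - deriv R s)
          (a * deriv (deriv R) q - deriv (deriv R) q) q :=
        (((hR'd q hqI).const_mul a).add_const _).sub (hR'd q hqI)
      have hΦ : HasDerivAt (fun s => VH α s - VL α s +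
          (α * s * deriv D s / deriv (deriv R) s) * ((a * deriv R s + a * b) - deriv R s))
          (((α * (-(D q)) + (1 - α) * deriv R q) -
            (α * (-(a * (D q + b))) + (1 - α) * (a * deriv R q + a * b))) +
           (deriv (fun s => α * s * deriv D s / deriv (deriv R) s) q *
              ((a * deriv R q + a * b) - deriv R q) +
            (α * q * deriv D q / deriv (deriv R) q) *
              (a * deriv (deriv R) q - deriv (deriv R) q))) q :=
        ((hVHd q hqI).sub (hVLd q hqI)).add (hF.mul hGd)
      have hev : E α =ᶠ[𝓝 q] (fun s => VH α s - VL α s +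
          (α * s * deriv D s / deriv (deriv R) s) * ((a * deriv R s + a * b) - deriv R s)) :=
        eventually_of_mem (isOpen_Ioo.mem_nhds hq) (fun s hs => hEeq s hs)
      have hres := hΦ.congr_of_eventuallyEq hev
      have hval : (((α * (-(D q)) + (1 - α) * deriv R q) -
            (α * (-(a * (D q + b))) + (1 - α) * (a * deriv R q + a * b))) +
           (deriv (fun s => α * s * deriv D s / deriv (deriv R) s) q *
              ((a * deriv R q + a * b) - deriv R q) +
            (α * q * deriv D q / deriv (deriv R) q) *
              (a * deriv (deriv R) q - deriv (deriv R) q)))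
          = (deriv RL q - deriv RH q) *
            (-(1 - 2 * α) + deriv (fun s => α * s * deriv D s / deriv (deriv R) s) q) := by
        rw [hderivRL q hqI, hRH_R, hderivR q hqI]
        have h2ne : deriv (deriv R) q ≠ 0 := ne_of_lt (hR'' q hqI)
        field_simp [h2ne]
        ring
      rw [hval] at hres
      exact hres
    -- derivative of W
    have hWd : ∀ μ ∈ Set.Ioo (0:ℝ) 1, HasDerivAt (W α) (E α (p μ)) μ := by
      intro μ hμ
      have hμIcc : μ ∈ Set.Icc (0:ℝ) 1 := ⟨hμ.1.le, hμ.2.le⟩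
      have hq0 : p μ ∈ Set.Ioo pLs pHs := hpIoo μ hμ
      have hq0I : p μ ∈ I := hIoo hq0
      have hpd' := hpd μ hμ
      have hcompL : HasDerivAt (fun ν => VL α (p ν))
          ((α * (-(a * (D (p μ) + b))) + (1 - α) * (a * deriv R (p μ) + a * b)) *
            (a * b * deriv (deriv R) (p μ) / (((a - 1) * deriv R (p μ) + a * b) ^ 2))⁻¹) μ :=
        (hVLd _ hq0I).comp μ hpd'
      have hcompH : HasDerivAt (fun ν => VH α (p ν))
          ((α * (-(D (p μ))) + (1 - α) * deriv R (p μ)) *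
            (a * b * deriv (deriv R) (p μ) / (((a - 1) * deriv R (p μ) + a * b) ^ 2))⁻¹) μ :=
        (hVHd _ hq0I).comp μ hpd'
      have h1m : HasDerivAt (fun ν : ℝ => 1 - ν) (-1) μ := by
        simpa using (hasDerivAt_id μ).const_sub 1
      have h1 := h1m.mul hcompL
      have h2 := (hasDerivAt_id μ).mul hcompH
      have htot := h1.add h2
      have final : HasDerivAt (W α)
          ((-1 * VL α (p μ) + (1 - μ) *
              ((α * (-(a * (D (p μ) + b))) + (1 - α) * (a * deriv R (p μ) + a * b)) *
                (a * b * deriv (deriv R) (p μ) /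
                  (((a - 1) * deriv R (p μ) + a * b) ^ 2))⁻¹)) +
           (1 * VH α (p μ) + μ *
              ((α * (-(D (p μ))) + (1 - α) * deriv R (p μ)) *
                (a * b * deriv (deriv R) (p μ) /
                  (((a - 1) * deriv R (p μ) + a * b) ^ 2))⁻¹))) μ := by
        rw [hW α]; exact htot
      have hEval : ((-1 * VL α (p μ) + (1 - μ) *
              ((α * (-(a * (D (p μ) + b))) + (1 - α) * (a * deriv R (p μ) + a * b)) *
                (a * b * deriv (deriv R) (p μ) /
                  (((a - 1) * deriv R (p μ) + a * b) ^ 2))⁻¹)) +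
           (1 * VH α (p μ) + μ *
              ((α * (-(D (p μ))) + (1 - α) * deriv R (p μ)) *
                (a * b * deriv (deriv R) (p μ) /
                  (((a - 1) * deriv R (p μ) + a * b) ^ 2))⁻¹)))
          = E α (p μ) := by
        rw [hEeq _ hq0]
        have hfoc := hFOC μ hμIcc
        set q0 := p μ with hq0def
        have hg : (a - 1) * deriv R q0 + a * b < 0 := hGneg _ (Set.Ioo_subset_Icc_self hq0)
        have hgne : (a - 1) * deriv R q0 + a * b ≠ 0 := ne_of_lt hg
        have h2' : deriv (deriv R) q0 < 0 := hR'' _ hq0I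
        have h2ne : deriv (deriv R) q0 ≠ 0 := ne_of_lt h2'
        have hane : a ≠ 0 := ne_of_gt ha
        have hbne : b ≠ 0 := ne_of_lt hb
        have hμval : μ = a * (deriv R q0 + b) / ((a - 1) * deriv R q0 + a * b) := by
          rw [eq_div_iff hgne]
          linear_combination -hfoc
        clear_value q0
        have hr := hderivR _ hq0I
        have key2 : μ * ((a - 1) * deriv R q0 + a * b) = a * (deriv R q0 + b) := by
          linear_combination -hfoc
        have key1 : (1 - μ) * ((a - 1) * deriv R q0 + a * b) = -deriv R q0 := by
          linear_combination -key2
        have hsum : ((a - 1) * deriv R q0 + a * b) *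
            ((1 - μ) * (α * (-(a * (D q0 + b))) + (1 - α) * (a * deriv R q0 + a * b)) +
              μ * (α * (-(D q0)) + (1 - α) * deriv R q0)) = a * b * α * q0 * deriv D q0 := by
          linear_combination (α * (-(a * (D q0 + b))) + (1 - α) * (a * deriv R q0 + a * b)) * key1 +
            (α * (-(D q0)) + (1 - α) * deriv R q0) * key2 + α * a * b * hr
        have hrhs : α * q0 * deriv D q0 / deriv (deriv R) q0 * (a * deriv R q0 + a * b - deriv R q0)
            = ((a - 1) * deriv R q0 + a * b) *
              ((1 - μ) * (α * (-(a * (D q0 + b))) + (1 - α) * (a * deriv R q0 + a * b)) +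
                μ * (α * (-(D q0)) + (1 - α) * deriv R q0)) * ((a - 1) * deriv R q0 + a * b) /
                (a * b * deriv (deriv R) q0) := by
          rw [hsum]; field_simp; ring
        rw [hrhs, inv_div]; ring
      exact hEval ▸ final
    -- continuity of W
    have hWcont : ContinuousOn (W α) (Set.Icc (0:ℝ) 1) := by
      rw [hW α]
      have hVLc : ContinuousOn (VL α) I := fun q hq =>
        (hVLd q hq).differentiableAt.continuousAt.continuousWithinAt
      have hVHc : ContinuousOn (VH α) I := fun q hq =>
        (hVHd q hq).differentiableAt.continuousAt.continuousWithinAt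
      have hmap : Set.MapsTo p (Set.Icc (0:ℝ) 1) I := fun μ hμ => hIcc (hpmem μ hμ)
      exact ((continuousOn_const.sub continuousOn_id).mul (hVLc.comp hpcont hmap)).add
        (continuousOn_id.mul (hVHc.comp hpcont hmap))
    -- derivative of the auxiliary function h
    have hhd : ∀ q ∈ I, HasDerivAt
        (fun q => (2 * α - 1) * q + α * q * deriv D q / deriv (deriv R) q)
        ((2 * α - 1) + deriv (fun s => α * s * deriv D s / deriv (deriv R) s) q) q := by
      intro q hq
      have h1 : HasDerivAt (fun s : ℝ => (2 * α - 1) * s) (2 * α - 1) q := by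
        simpa using (hasDerivAt_id q).const_mul (2 * α - 1)
      exact h1.add (hFd q hq).hasDerivAt
    have hGlt : ∀ q ∈ Set.Ioo pLs pHs, deriv RL q - deriv RH q < 0 := by
      intro q hq
      rw [hGLH q (Set.Ioo_subset_Icc_self hq)]
      exact hGneg q (Set.Ioo_subset_Icc_self hq)
    -- equivalence chains
    have hmono_of_C : (∀ q ∈ Set.Ioo pLs pHs,
        0 ≤ -(1 - 2 * α) + deriv (fun s => α * s * deriv D s / deriv (deriv R) s) q) →
        MonotoneOn (fun q => (2 * α - 1) * q + α * q * deriv D q / deriv (deriv R) q)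
          (Set.Ioo pLs pHs) := by
      intro hC
      apply monotoneOn_of_deriv_nonneg (convex_Ioo pLs pHs)
      · exact fun q hq => (hhd q (hIoo hq)).differentiableAt.continuousAt.continuousWithinAt
      · intro q hq
        rw [interior_Ioo] at hq
        exact (hhd q (hIoo hq)).differentiableAt.differentiableWithinAt
      · intro q hq
        rw [interior_Ioo] at hq
        rw [(hhd q (hIoo hq)).deriv]
        have := hC q hq
        linarith
    have hC_of_mono : MonotoneOn (fun q => (2 * α - 1) * q + α * q * deriv D q / deriv (deriv R) q)
          (Set.Ioo pLs pHs) →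
        (∀ q ∈ Set.Ioo pLs pHs,
          0 ≤ -(1 - 2 * α) + deriv (fun s => α * s * deriv D s / deriv (deriv R) s) q) := by
      intro hm q hq
      have := aux_deriv_nonneg_of_monotoneOn (hhd q (hIoo hq)) hm (isOpen_Ioo.mem_nhds hq) hq
      linarith
    have hanti_of_C' : (∀ q ∈ Set.Ioo pLs pHs,
        -(1 - 2 * α) + deriv (fun s => α * s * deriv D s / deriv (deriv R) s) q ≤ 0) →
        AntitoneOn (fun q => (2 * α - 1) * q + α * q * deriv D q / deriv (deriv R) q)
          (Set.Ioo pLs pHs) := by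
      intro hC
      apply antitoneOn_of_deriv_nonpos (convex_Ioo pLs pHs)
      · exact fun q hq => (hhd q (hIoo hq)).differentiableAt.continuousAt.continuousWithinAt
      · intro q hq
        rw [interior_Ioo] at hq
        exact (hhd q (hIoo hq)).differentiableAt.differentiableWithinAt
      · intro q hq
        rw [interior_Ioo] at hq
        rw [(hhd q (hIoo hq)).deriv]
        have := hC q hq
        linarith
    have hC'_of_anti : AntitoneOn (fun q => (2 * α - 1) * q + α * q * deriv D q / deriv (deriv R) q)
          (Set.Ioo pLs pHs) →
        (∀ q ∈ Set.Ioo pLs pHs,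
          -(1 - 2 * α) + deriv (fun s => α * s * deriv D s / deriv (deriv R) s) q ≤ 0) := by
      intro hm q hq
      have := aux_deriv_nonpos_of_antitoneOn (hhd q (hIoo hq)) hm (isOpen_Ioo.mem_nhds hq) hq
      linarith
    have hEanti_of_C : (∀ q ∈ Set.Ioo pLs pHs,
        0 ≤ -(1 - 2 * α) + deriv (fun s => α * s * deriv D s / deriv (deriv R) s) q) →
        AntitoneOn (E α) (Set.Ioo pLs pHs) := by
      intro hC
      apply antitoneOn_of_deriv_nonpos (convex_Ioo pLs pHs)
      · exact fun q hq => (hEder q hq).differentiableAt.continuousAt.continuousWithinAt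
      · intro q hq
        rw [interior_Ioo] at hq
        exact (hEder q hq).differentiableAt.differentiableWithinAt
      · intro q hq
        rw [interior_Ioo] at hq
        rw [(hEder q hq).deriv]
        nlinarith [hGlt q hq, hC q hq]
    have hC_of_Eanti : AntitoneOn (E α) (Set.Ioo pLs pHs) →
        (∀ q ∈ Set.Ioo pLs pHs,
          0 ≤ -(1 - 2 * α) + deriv (fun s => α * s * deriv D s / deriv (deriv R) s) q) := by
      intro hm q hq
      have h1 := aux_deriv_nonpos_of_antitoneOn (hEder q hq) hm (isOpen_Ioo.mem_nhds hq) hq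
      by_contra hcon
      push_neg at hcon
      nlinarith [hGlt q hq]
    have hEmono_of_C' : (∀ q ∈ Set.Ioo pLs pHs,
        -(1 - 2 * α) + deriv (fun s => α * s * deriv D s / deriv (deriv R) s) q ≤ 0) →
        MonotoneOn (E α) (Set.Ioo pLs pHs) := by
      intro hC
      apply monotoneOn_of_deriv_nonneg (convex_Ioo pLs pHs)
      · exact fun q hq => (hEder q hq).differentiableAt.continuousAt.continuousWithinAt
      · intro q hq
        rw [interior_Ioo] at hq
        exact (hEder q hq).differentiableAt.differentiableWithinAt
      · intro q hq
        rw [interior_Ioo] at hq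
        rw [(hEder q hq).deriv]
        nlinarith [hGlt q hq, hC q hq]
    have hC'_of_Emono : MonotoneOn (E α) (Set.Ioo pLs pHs) →
        (∀ q ∈ Set.Ioo pLs pHs,
          -(1 - 2 * α) + deriv (fun s => α * s * deriv D s / deriv (deriv R) s) q ≤ 0) := by
      intro hm q hq
      have h1 := aux_deriv_nonneg_of_monotoneOn (hEder q hq) hm (isOpen_Ioo.mem_nhds hq) hq
      by_contra hcon
      push_neg at hcon
      nlinarith [hGlt q hq]
    -- from E monotonicity over prices to W derivative monotonicity over beliefs
    have hWanti_of_Eanti : AntitoneOn (E α) (Set.Ioo pLs pHs) →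
        AntitoneOn (deriv (W α)) (Set.Ioo (0:ℝ) 1) := by
      intro hE' μ1 h1 μ2 h2 h12
      rw [(hWd μ1 h1).deriv, (hWd μ2 h2).deriv]
      rcases eq_or_lt_of_le h12 with h | h
      · rw [h]
      · exact hE' (hpIoo μ1 h1) (hpIoo μ2 h2)
          (hpmono ⟨h1.1.le, h1.2.le⟩ ⟨h2.1.le, h2.2.le⟩ h).le
    have hWmono_of_Emono : MonotoneOn (E α) (Set.Ioo pLs pHs) →
        MonotoneOn (deriv (W α)) (Set.Ioo (0:ℝ) 1) := by
      intro hE' μ1 h1 μ2 h2 h12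
      rw [(hWd μ1 h1).deriv, (hWd μ2 h2).deriv]
      rcases eq_or_lt_of_le h12 with h | h
      · rw [h]
      · exact hE' (hpIoo μ1 h1) (hpIoo μ2 h2)
          (hpmono ⟨h1.1.le, h1.2.le⟩ ⟨h2.1.le, h2.2.le⟩ h).le
    have hEanti_of_conc : ConcaveOn ℝ (Set.Icc (0:ℝ) 1) (W α) →
        AntitoneOn (E α) (Set.Ioo pLs pHs) := by
      intro hconc
      have hconcIoo : ConcaveOn ℝ (Set.Ioo (0:ℝ) 1) (W α) :=
        hconc.subset Set.Ioo_subset_Icc_self (convex_Ioo 0 1)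
      have hanti := hconcIoo.antitoneOn_deriv (fun μ hμ => (hWd μ hμ).differentiableAt)
      intro q1 hq1 q2 hq2 h12
      obtain ⟨μ1, hμ1, hp1'⟩ := hsurj q1 hq1
      obtain ⟨μ2, hμ2, hp2'⟩ := hsurj q2 hq2
      have hμle : μ1 ≤ μ2 := by
        by_contra hcon
        push_neg at hcon
        have := hpmono ⟨hμ2.1.le, hμ2.2.le⟩ ⟨hμ1.1.le, hμ1.2.le⟩ hcon
        rw [hp1', hp2'] at this
        linarith
      rw [← hp1', ← hp2', ← (hWd μ1 hμ1).deriv, ← (hWd μ2 hμ2).deriv]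
      exact hanti hμ1 hμ2 hμle
    have hEmono_of_conv : ConvexOn ℝ (Set.Icc (0:ℝ) 1) (W α) →
        MonotoneOn (E α) (Set.Ioo pLs pHs) := by
      intro hconv
      have hconvIoo : ConvexOn ℝ (Set.Ioo (0:ℝ) 1) (W α) :=
        hconv.subset Set.Ioo_subset_Icc_self (convex_Ioo 0 1)
      have hmono := hconvIoo.monotoneOn_deriv (fun μ hμ => (hWd μ hμ).differentiableAt)
      intro q1 hq1 q2 hq2 h12
      obtain ⟨μ1, hμ1, hp1'⟩ := hsurj q1 hq1
      obtain ⟨μ2, hμ2, hp2'⟩ := hsurj q2 hq2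
      have hμle : μ1 ≤ μ2 := by
        by_contra hcon
        push_neg at hcon
        have := hpmono ⟨hμ2.1.le, hμ2.2.le⟩ ⟨hμ1.1.le, hμ1.2.le⟩ hcon
        rw [hp1', hp2'] at this
        linarith
      rw [← hp1', ← hp2', ← (hWd μ1 hμ1).deriv, ← (hWd μ2 hμ2).deriv]
      exact hmono hμ1 hμ2 hμle
    have hconc_of_Wanti : AntitoneOn (deriv (W α)) (Set.Ioo (0:ℝ) 1) →
        ConcaveOn ℝ (Set.Icc (0:ℝ) 1) (W α) := by
      intro hanti
      apply AntitoneOn.concaveOn_of_deriv (convex_Icc 0 1) hWcont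
      · intro μ hμ
        rw [interior_Icc] at hμ
        exact (hWd μ hμ).differentiableAt.differentiableWithinAt
      · rw [interior_Icc]
        exact hanti
    have hconv_of_Wmono : MonotoneOn (deriv (W α)) (Set.Ioo (0:ℝ) 1) →
        ConvexOn ℝ (Set.Icc (0:ℝ) 1) (W α) := by
      intro hmono
      apply MonotoneOn.convexOn_of_deriv (convex_Icc 0 1) hWcont
      · intro μ hμ
        rw [interior_Icc] at hμ
        exact (hWd μ hμ).differentiableAt.differentiableWithinAt
      · rw [interior_Icc]
        exact hmono
    refine ⟨hEder, ⟨?_, ?_⟩, ⟨?_, ?_⟩⟩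
    · intro hconc
      exact hmono_of_C (hC_of_Eanti (hEanti_of_conc hconc))
    · intro hm
      exact hconc_of_Wanti (hWanti_of_Eanti (hEanti_of_C (hC_of_mono hm)))
    · intro hconv
      exact hanti_of_C' (hC'_of_Emono (hEmono_of_conv hconv))
    · intro hm
      exact hconv_of_Wmono (hWmono_of_Emono (hEmono_of_C' (hC'_of_anti hm)))
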